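/- Let α ∈ ℝ with 0 < α < 1/2, let u, v, f, g : ℕ → ℝ be the sequences of the context, and set h(k) = 1/(f(k)·g(k)), w(0) = 0, w(k+1) = w(k) + h(k). With Π₃(k) = ∏_{j=1}^{k} ((j−α)(j−2α))/((j−1+α)(j−1+2α)) (empty product 1), the following closed formulas hold: h(3k) = Π₃(k) and h(3k+1) = ((k+1−2α)/(k+α))·Π₃(k) for all k ≥ 0, h(3k−1) = Π₃(k) for all k ≥ 1; and w(3k) = (k/(1−2α))·Π₃(k) and w(3k+1) = ((k+1−2α)/(1−2α))·Π₃(k) for all k ≥ 0, w(3k−1) = ((k−1+2α)/(1−2α))·Π₃(k) for all k ≥ 1. -/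

import Mathlib

/-- `Π₁(k) = ∏_{j=1}^{k} (j+2α)/(j−α)`. -/
noncomputable def Pi1 (α : ℝ) (k : ℕ) : ℝ :=
  ∏ j ∈ Finset.range k, (((j : ℝ) + 1) + 2 * α) / (((j : ℝ) + 1) - α)

/-- `Π₂(k) = ∏_{j=1}^{k} (j+α)/(j−2α)`. -/
noncomputable def Pi2 (α : ℝ) (k : ℕ) : ℝ :=
  ∏ j ∈ Finset.range k, (((j : ℝ) + 1) + α) / (((j : ℝ) + 1) - 2 * α)

/-- The axis values of the field `u`: `u(3k) = (2k/(k+2α))·Π₁(k)`,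
`u(3k+1) = ((2k+2α)/(k+2α))·Π₁(k)`, `u(3k+2) = 2·Π₁(k)`. -/
noncomputable def uSeq (α : ℝ) (n : ℕ) : ℝ :=
  if n % 3 = 0 then (2 * ((n / 3 : ℕ) : ℝ) / (((n / 3 : ℕ) : ℝ) + 2 * α)) * Pi1 α (n / 3)
  else if n % 3 = 1 then
    ((2 * ((n / 3 : ℕ) : ℝ) + 2 * α) / (((n / 3 : ℕ) : ℝ) + 2 * α)) * Pi1 α (n / 3)
  else 2 * Pi1 α (n / 3)

/-- The axis values of the field `f`: `f(0) = f(1) = 1` and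
`f(3k−1) = f(3k) = f(3k+1) = (2α/(k+2α))·Π₁(k)` for `k ≥ 1`. -/
noncomputable def fSeq (α : ℝ) (n : ℕ) : ℝ :=
  if n ≤ 1 then 1
  else (2 * α / ((((n + 1) / 3 : ℕ) : ℝ) + 2 * α)) * Pi1 α ((n + 1) / 3)

/-- The axis values of the field `v`: `v(3k) = (k/(k+α))·Π₂(k)`,
`v(3k+1) = Π₂(k)`, and `v(3k−1) = ((k−α)/(k+α))·Π₂(k)` for `k ≥ 1`. -/
noncomputable def vSeq (α : ℝ) (n : ℕ) : ℝ :=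
  if n % 3 = 0 then (((n / 3 : ℕ) : ℝ) / (((n / 3 : ℕ) : ℝ) + α)) * Pi2 α (n / 3)
  else if n % 3 = 1 then Pi2 α (n / 3)
  else (((((n + 1) / 3 : ℕ) : ℝ) - α) / ((((n + 1) / 3 : ℕ) : ℝ) + α))
    * Pi2 α ((n + 1) / 3)

/-- The axis values of the field `g`: `g(0) = 1` and
`g(3k−2) = g(3k−1) = g(3k) = (α/(k+α))·Π₂(k)` for `k ≥ 1`. -/
noncomputable def gSeq (α : ℝ) (n : ℕ) : ℝ :=
  if n = 0 then 1
  else (α / ((((n + 2) / 3 : ℕ) : ℝ) + α)) * Pi2 α ((n + 2) / 3)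

/-- The third field `h(k) = 1/(f(k)·g(k))`. -/
noncomputable def hSeq (α : ℝ) (n : ℕ) : ℝ := 1 / (fSeq α n * gSeq α n)

/-- The potential `w` of the third field: `w(0) = 0`, `w(k+1) = w(k) + h(k)`. -/
noncomputable def wSeq (α : ℝ) : ℕ → ℝ
  | 0 => 0
  | n + 1 => wSeq α n + hSeq α n

/-- `Π₃(k) = ∏_{j=1}^{k} ((j−α)(j−2α))/((j−1+α)(j−1+2α))`. -/
noncomputable def Pi3 (α : ℝ) (k : ℕ) : ℝ :=
  ∏ j ∈ Finset.range k,
    ((((j : ℝ) + 1) - α) * (((j : ℝ) + 1) - 2 * α)) / (((j : ℝ) + α) * ((j : ℝ) + 2 * α))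

section Aux

variable {α : ℝ} (hα0 : 0 < α) (hα : α < 1 / 2)
include hα0 hα

lemma Pi1_pos (k : ℕ) : 0 < Pi1 α k := by
  refine Finset.prod_pos fun j _ => div_pos ?_ ?_ <;>
  · have : (0:ℝ) ≤ j := Nat.cast_nonneg j
    nlinarith

lemma Pi2_pos (k : ℕ) : 0 < Pi2 α k := by
  refine Finset.prod_pos fun j _ => div_pos ?_ ?_ <;>
  · have : (0:ℝ) ≤ j := Nat.cast_nonneg j
    nlinarith

lemma Pi3_pos (k : ℕ) : 0 < Pi3 α k := by
  refine Finset.prod_pos fun j _ => div_pos (mul_pos ?_ ?_) (mul_pos ?_ ?_) <;>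
  · have : (0:ℝ) ≤ j := Nat.cast_nonneg j
    nlinarith

lemma Pi1_succ (k : ℕ) :
    Pi1 α (k + 1) = Pi1 α k * ((((k:ℝ) + 1) + 2 * α) / (((k:ℝ) + 1) - α)) :=
  Finset.prod_range_succ _ k

lemma Pi2_succ (k : ℕ) :
    Pi2 α (k + 1) = Pi2 α k * ((((k:ℝ) + 1) + α) / (((k:ℝ) + 1) - 2 * α)) :=
  Finset.prod_range_succ _ k

lemma Pi3_succ (k : ℕ) :
    Pi3 α (k + 1) = Pi3 α k *
      (((((k:ℝ) + 1) - α) * (((k:ℝ) + 1) - 2 * α)) / (((k:ℝ) + α) * ((k:ℝ) + 2 * α))) :=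
  Finset.prod_range_succ _ k

lemma Pi3_eq (k : ℕ) :
    Pi3 α k = (((k:ℝ) + α) * ((k:ℝ) + 2 * α)) / (Pi1 α k * Pi2 α k * (2 * α ^ 2)) := by
  induction k with
  | zero =>
    have : Pi1 α 0 = 1 := by simp [Pi1]
    have : Pi2 α 0 = 1 := by simp [Pi2]
    simp [Pi1, Pi2, Pi3]
    rw [eq_div_iff (by positivity)]
    ring
  | succ k ih =>
    have h0 : (0:ℝ) ≤ k := Nat.cast_nonneg k
    have h1 : (k:ℝ) + 1 - α ≠ 0 := by nlinarith
    have h2 : (k:ℝ) + 1 - 2 * α ≠ 0 := by nlinarith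
    have h3 : (k:ℝ) + α ≠ 0 := by nlinarith
    have h4 : (k:ℝ) + 2 * α ≠ 0 := by nlinarith
    have hp1 := (Pi1_pos hα0 hα k).ne'
    have hp2 := (Pi2_pos hα0 hα k).ne'
    rw [Pi1_succ hα0 hα, Pi2_succ hα0 hα, Pi3_succ hα0 hα, ih]
    push_cast
    field_simp

lemma hSeq_3k (k : ℕ) : hSeq α (3 * k) = Pi3 α k := by
  rcases Nat.eq_zero_or_pos k with rfl | hk
  · simp [hSeq, fSeq, gSeq, Pi3]
  · have h0 : (1:ℝ) ≤ k := by exact_mod_cast hk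
    have hd1 : (3 * k + 1) / 3 = k := by omega
    have hd2 : (3 * k + 2) / 3 = k := by omega
    have hne1 : ¬ (3 * k ≤ 1) := by omega
    have hne2 : 3 * k ≠ 0 := by omega
    have h3 : (k:ℝ) + α ≠ 0 := by nlinarith
    have h4 : (k:ℝ) + 2 * α ≠ 0 := by nlinarith
    have hp1 := (Pi1_pos hα0 hα k).ne'
    have hp2 := (Pi2_pos hα0 hα k).ne'
    have hα' : α ≠ 0 := ne_of_gt hα0
    simp only [hSeq, fSeq, gSeq, hne1, hne2, hd1, hd2, if_false, if_neg]
    rw [Pi3_eq hα0 hα]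
    field_simp

lemma hSeq_3k1 (k : ℕ) :
    hSeq α (3 * k + 1) = (((k:ℝ) + 1 - 2 * α) / ((k:ℝ) + α)) * Pi3 α k := by
  have h0 : (0:ℝ) ≤ k := Nat.cast_nonneg k
  have h2 : (k:ℝ) + 1 - 2 * α ≠ 0 := by nlinarith
  have h3 : (k:ℝ) + α ≠ 0 := by nlinarith
  have h4 : (k:ℝ) + 2 * α ≠ 0 := by nlinarith
  have h5 : (k:ℝ) + 1 + α ≠ 0 := by nlinarith
  have hp1 := (Pi1_pos hα0 hα k).ne'
  have hp2 := (Pi2_pos hα0 hα k).ne'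
  have hα' : α ≠ 0 := ne_of_gt hα0
  rcases Nat.eq_zero_or_pos k with rfl | hk
  · have hf : fSeq α 1 = 1 := by simp [fSeq]
    have hg : gSeq α 1 = (α / ((1:ℝ) + α)) * Pi2 α 1 := by
      norm_num [gSeq]
    have hPi2_1 : Pi2 α 1 = (1 + α) / (1 - 2 * α) := by
      simp [Pi2]
    have hPi3_0 : Pi3 α 0 = 1 := by simp [Pi3]
    rw [hSeq, hf, hg, hPi2_1, hPi3_0]
    push_cast
    field_simp
    ring
  · have h1 : (1:ℝ) ≤ k := by exact_mod_cast hk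
    have hd1 : (3 * k + 1 + 1) / 3 = k := by omega
    have hd2 : (3 * k + 1 + 2) / 3 = k + 1 := by omega
    have hne1 : ¬ (3 * k + 1 ≤ 1) := by omega
    have hne2 : 3 * k + 1 ≠ 0 := by omega
    simp only [hSeq, fSeq, gSeq, hne1, hne2, hd1, hd2, if_false, if_neg]
    rw [Pi2_succ hα0 hα, Pi3_eq hα0 hα]
    push_cast
    field_simp

lemma hSeq_3k2 (k : ℕ) : hSeq α (3 * k + 2) = Pi3 α (k + 1) := by
  have h0 : (0:ℝ) ≤ k := Nat.cast_nonneg k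
  have h5 : (k:ℝ) + 1 + α ≠ 0 := by nlinarith
  have h6 : (k:ℝ) + 1 + 2 * α ≠ 0 := by nlinarith
  have hp1 := (Pi1_pos hα0 hα (k + 1)).ne'
  have hp2 := (Pi2_pos hα0 hα (k + 1)).ne'
  have hα' : α ≠ 0 := ne_of_gt hα0
  have hd1 : (3 * k + 2 + 1) / 3 = k + 1 := by omega
  have hd2 : (3 * k + 2 + 2) / 3 = k + 1 := by omega
  have hne1 : ¬ (3 * k + 2 ≤ 1) := by omega
  have hne2 : 3 * k + 2 ≠ 0 := by omega
  simp only [hSeq, fSeq, gSeq, hne1, hne2, hd1, hd2, if_false, if_neg]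
  rw [Pi3_eq hα0 hα]
  push_cast
  field_simp

lemma wSeq_formulas (k : ℕ) :
    wSeq α (3 * k) = ((k:ℝ) / (1 - 2 * α)) * Pi3 α k ∧
    wSeq α (3 * k + 1) = (((k:ℝ) + 1 - 2 * α) / (1 - 2 * α)) * Pi3 α k ∧
    wSeq α (3 * k + 2) = (((k:ℝ) + 2 * α) / (1 - 2 * α)) * Pi3 α (k + 1) := by
  have hne : (1:ℝ) - 2 * α ≠ 0 := by nlinarith
  have hα' : α ≠ 0 := ne_of_gt hα0
  induction k with
  | zero =>
    have e0 : wSeq α 0 = 0 := rfl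
    have e1 : wSeq α 1 = wSeq α 0 + hSeq α 0 := rfl
    have e2 : wSeq α 2 = wSeq α 1 + hSeq α 1 := rfl
    have hh0 := hSeq_3k hα0 hα 0
    have hh1 := hSeq_3k1 hα0 hα 0
    have hh2 : hSeq α 2 = Pi3 α 1 := hSeq_3k2 hα0 hα 0
    norm_num at hh0 hh1
    have hPi3_0 : Pi3 α 0 = 1 := by simp [Pi3]
    have hPi3_1 : Pi3 α 1 = ((1 - α) * (1 - 2 * α)) / (α * (2 * α)) := by
      simp [Pi3]
    have h1a : (1:ℝ) - α ≠ 0 := by nlinarith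
    refine ⟨by rw [e0]; norm_num, ?_, ?_⟩
    · rw [e1, e0, hh0, hPi3_0]
      field_simp
      push_cast
      ring
    · rw [e2, e1, e0, hh0, hh1, hPi3_0, hPi3_1]
      push_cast
      field_simp
      ring
  | succ k ih =>
    obtain ⟨iw0, iw1, iw2⟩ := ih
    have h0 : (0:ℝ) ≤ k := Nat.cast_nonneg k
    have h1 : (k:ℝ) + 1 - α ≠ 0 := by nlinarith
    have h2 : (k:ℝ) + 1 - 2 * α ≠ 0 := by nlinarith
    have h3 : (k:ℝ) + α ≠ 0 := by nlinarith
    have h5 : (k:ℝ) + 1 + α ≠ 0 := by nlinarith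
    have h6 : (k:ℝ) + 1 + 2 * α ≠ 0 := by nlinarith
    have h7 : (k:ℝ) + 2 - 2 * α ≠ 0 := by nlinarith
    have h8 : (k:ℝ) + 2 - α ≠ 0 := by nlinarith
    have e0 : wSeq α (3 * (k + 1)) = wSeq α (3 * k + 2) + hSeq α (3 * k + 2) := by
      have h : 3 * (k + 1) = (3 * k + 2) + 1 := by ring
      rw [h]; rfl
    have e1 : wSeq α (3 * (k + 1) + 1) = wSeq α (3 * (k + 1)) + hSeq α (3 * (k + 1)) := rfl
    have e2 : wSeq α (3 * (k + 1) + 2) = wSeq α (3 * (k + 1) + 1) + hSeq α (3 * (k + 1) + 1) := rfl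
    have hh2 := hSeq_3k2 hα0 hα k
    have hhk1 := hSeq_3k hα0 hα (k + 1)
    have hhk11 := hSeq_3k1 hα0 hα (k + 1)
    refine ⟨?_, ?_, ?_⟩
    · rw [e0, iw2, hh2]
      push_cast
      field_simp
      ring
    · rw [e1, e0, iw2, hh2, hhk1]
      push_cast
      field_simp
      ring
    · rw [e2, e1, e0, iw2, hh2, hhk1, hhk11, Pi3_succ hα0 hα (k + 1)]
      push_cast
      field_simp
      ring

end Aux

/-- Closed formulas for the third field `h` and its potential `w`. -/
theorem closed_formulas_third_field
    (α : ℝ) (hα0 : 0 < α) (hα : α < 1 / 2) :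
    (∀ k : ℕ, hSeq α (3 * k) = Pi3 α k ∧
      hSeq α (3 * k + 1) = (((k : ℝ) + 1 - 2 * α) / ((k : ℝ) + α)) * Pi3 α k) ∧
    (∀ k : ℕ, 1 ≤ k → hSeq α (3 * k - 1) = Pi3 α k) ∧
    (∀ k : ℕ, wSeq α (3 * k) = ((k : ℝ) / (1 - 2 * α)) * Pi3 α k ∧
      wSeq α (3 * k + 1) = (((k : ℝ) + 1 - 2 * α) / (1 - 2 * α)) * Pi3 α k) ∧
    (∀ k : ℕ, 1 ≤ k →
      wSeq α (3 * k - 1) = (((k : ℝ) - 1 + 2 * α) / (1 - 2 * α)) * Pi3 α k) := by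
  refine ⟨fun k => ⟨hSeq_3k hα0 hα k, hSeq_3k1 hα0 hα k⟩, ?_, fun k => ⟨(wSeq_formulas hα0 hα k).1, (wSeq_formulas hα0 hα k).2.1⟩, ?_⟩
  · rintro (_ | m) hk
    · omega
    · have h : 3 * (m + 1) - 1 = 3 * m + 2 := by omega
      rw [h, hSeq_3k2 hα0 hα m]
  · rintro (_ | m) hk
    · omega
    · have h1 : 3 * (m + 1) - 1 = 3 * m + 2 := by omega
      have h2 := (wSeq_formulas hα0 hα m).2.2
      rw [h1, h2]
      push_cast
      ring_nf
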